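/- Let X be a finite set of cardinality n, let π̃ be a probability distribution on X, and let x_1, x_2, … be independent samples from π̃. For T ≥ 0, let L_T = {x_1, …, x_T} (with L_0 = ∅), and call the T-th sample a success if π̃(L_{T−1}) ≥ 1/2 or π̃(L_T) ≥ π̃(L_{T−1}) + 1/(4n). Then for every T ≥ 1, conditioned on any outcome of the first T−1 samples, the T-th sample is a success with probability at least 1/4. -/

import Mathlib

open Finset in
open scoped Classical in
/-- Let `X` be a finite set of cardinality `n`, `π̃` a probability
distribution on `X`, and draw independent samples `x₁, x₂, …` from `π̃`.  With
`L_T = {x₁, …, x_T}`, call the `T`-th sample a *success* if `π̃(L_{T−1}) ≥ 1/2` or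
`π̃(L_T) ≥ π̃(L_{T−1}) + 1/(4n)`.  Then for every `T ≥ 1`, conditioned on any outcome
`xs` of the first `T−1` samples, the `T`-th sample is a success with probability at
least `1/4`.  (By independence, the conditional distribution of the `T`-th sample is
again `π̃`, so the conditional probability is the `π̃`-mass of the successful `b`'s.) -/
theorem stmt14 {X : Type*} [Fintype X] [DecidableEq X] (n : ℕ) (hcard : Fintype.card X = n)
    (πt : X → ℝ) (hπt : ∀ x, 0 ≤ πt x) (hsum : ∑ x, πt x = 1)
    (T : ℕ) (hT : 1 ≤ T) (xs : Fin (T - 1) → X) :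
    (1 : ℝ) / 4 ≤
      ∑ b ∈ Finset.univ.filter (fun b =>
          (1 : ℝ) / 2 ≤ ∑ a ∈ Finset.image xs Finset.univ, πt a ∨
          (∑ a ∈ Finset.image xs Finset.univ, πt a) + 1 / (4 * n)
            ≤ ∑ a ∈ insert b (Finset.image xs Finset.univ), πt a),
        πt b := by
  have hX : Nonempty X := by
    by_contra h
    rw [not_nonempty_iff] at h
    simp [Finset.univ_eq_empty] at hsum
  have hn : 0 < n := by
    rw [← hcard]; exact Fintype.card_pos
  have hnR : (0 : ℝ) < n := by exact_mod_cast hn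
  set L := Finset.image xs Finset.univ with hL
  set p := ∑ a ∈ L, πt a with hp
  by_cases hhalf : (1 : ℝ) / 2 ≤ p
  · have : (Finset.univ.filter fun b =>
        (1 : ℝ) / 2 ≤ p ∨ p + 1 / (4 * n) ≤ ∑ a ∈ insert b L, πt a) = Finset.univ := by
      apply Finset.filter_true_of_mem
      intro b _
      exact Or.inl hhalf
    rw [this, hsum]
    norm_num
  · -- p < 1/2
    have hplt : p < 1 / 2 := lt_of_not_ge hhalf
    set S := Finset.univ.filter (fun b =>
        (1 : ℝ) / 2 ≤ p ∨ p + 1 / (4 * n) ≤ ∑ a ∈ insert b L, πt a) with hS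
    have hpos4n : (0 : ℝ) < 1 / (4 * n) := by positivity
    -- members of S are not in L
    have hSL : ∀ b ∈ S, b ∉ L := by
      intro b hb hbL
      rcases Finset.mem_filter.mp hb with ⟨-, h⟩
      rcases h with h | h
      · exact hhalf h
      · rw [Finset.insert_eq_self.mpr hbL] at h
        linarith
    have hSsub : S ⊆ Finset.univ \ L := fun b hb =>
      Finset.mem_sdiff.mpr ⟨Finset.mem_univ b, hSL b hb⟩
    set F := (Finset.univ \ L) \ S with hF
    have hsplit : ∑ b ∈ F, πt b + ∑ b ∈ S, πt b = ∑ b ∈ Finset.univ \ L, πt b :=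
      Finset.sum_sdiff hSsub
    have hcomp : ∑ b ∈ Finset.univ \ L, πt b + p = 1 := by
      rw [hp, Finset.sum_sdiff (Finset.subset_univ L), hsum]
    -- each failure has small mass
    have hFsmall : ∀ b ∈ F, πt b ≤ 1 / (4 * n) := by
      intro b hb
      rcases Finset.mem_sdiff.mp hb with ⟨hb1, hb2⟩
      rcases Finset.mem_sdiff.mp hb1 with ⟨-, hbL⟩
      have h2 : ¬ ((1 : ℝ) / 2 ≤ p ∨ p + 1 / (4 * n) ≤ ∑ a ∈ insert b L, πt a) := by
        intro h; exact hb2 (Finset.mem_filter.mpr ⟨Finset.mem_univ b, h⟩)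
      push_neg at h2
      have := h2.2
      rw [Finset.sum_insert hbL] at this
      linarith
    have hFcard : (F.card : ℝ) ≤ n := by
      have := Finset.card_le_card (Finset.subset_univ F)
      rw [Finset.card_univ, hcard] at this
      exact_mod_cast this
    have hFsum : ∑ b ∈ F, πt b ≤ 1 / 4 := by
      calc ∑ b ∈ F, πt b ≤ ∑ _b ∈ F, (1 / (4 * (n:ℝ))) := Finset.sum_le_sum hFsmall
        _ = F.card * (1 / (4 * (n:ℝ))) := by rw [Finset.sum_const, nsmul_eq_mul]
        _ ≤ (n:ℝ) * (1 / (4 * (n:ℝ))) := by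
            apply mul_le_mul_of_nonneg_right hFcard (le_of_lt hpos4n)
        _ = 1 / 4 := by field_simp
    linarith
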